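/- Let G be a 3-partite undirected graph with parts A = {a₁,…,aₙ}, B = {b₁,…,bₙ}, C = {c₁,…,cₙ} and edge set E (every edge of G joins vertices from two different parts). Construct a labeled digraph H over the alphabet {a, b} with vertex set A ∪ B ∪ C ∪ A' ∪ {u}, where A' = {a₁',…,aₙ'} and u are fresh, and with the following labeled edges: (u, a₁) and (a_i, a_{i+1}) for 1 ≤ i ≤ n−1, each labeled a; (a_i, b_j) labeled a for every edge {a_i, b_j} ∈ E; (b_i, c_j) labeled b for every edge {b_i, c_j} ∈ E; (c_i, a_j') labeled b for every edge {c_i, a_j} ∈ E; and (a_{i+1}', a_i') for 1 ≤ i ≤ n−1, each labeled b. Then there is a walk from u to a₁' in H whose label contains equally many occurrences of a and of b if and only if G contains a triangle, i.e. there exist i, j, l such that {a_i, b_j}, {b_j, c_l}, {c_l, a_i} are all edges of G. -/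

import Mathlib

/-- The alphabet {a, b}. -/
inductive Letter2 where
  | a : Letter2
  | b : Letter2
deriving DecidableEq, BEq

/-- A labeled walk in a `σ`-labeled digraph given by the edge relation `E`. -/
inductive LWalk {V σ : Type*} (E : V → σ → V → Prop) : V → List σ → V → Prop
  | nil (v : V) : LWalk E v [] v
  | cons {u v w : V} {c : σ} {l : List σ} :
      E u c v → LWalk E v l w → LWalk E u (c :: l) w

/-- Vertices of the constructed graph `H`:
the copies `A`, `B`, `C` of the parts, the fresh copies `A' = {a₁',…,aₙ'}`,
and the fresh vertex `u`. -/
inductive Vtx (n : ℕ) where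
  | vA : Fin n → Vtx n
  | vB : Fin n → Vtx n
  | vC : Fin n → Vtx n
  | vA' : Fin n → Vtx n
  | vu : Vtx n

/-- The labeled edges of `H`, where the tripartite graph `G` is given by the relations
`EAB`, `EBC`, `ECA` describing its edges between the respective parts
(vertices are 0-indexed, so `a₁` is `Vtx.vA ⟨0, _⟩`). -/
def triEdge {n : ℕ} (EAB EBC ECA : Fin n → Fin n → Prop) :
    Vtx n → Letter2 → Vtx n → Prop := fun x c y =>
  (c = Letter2.a ∧
    ((∃ h : 0 < n, x = Vtx.vu ∧ y = Vtx.vA ⟨0, h⟩) ∨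
     (∃ (i : ℕ) (h : i + 1 < n), x = Vtx.vA ⟨i, by omega⟩ ∧ y = Vtx.vA ⟨i + 1, h⟩) ∨
     (∃ i j : Fin n, EAB i j ∧ x = Vtx.vA i ∧ y = Vtx.vB j))) ∨
  (c = Letter2.b ∧
    ((∃ i j : Fin n, EBC i j ∧ x = Vtx.vB i ∧ y = Vtx.vC j) ∨
     (∃ i j : Fin n, ECA i j ∧ x = Vtx.vC i ∧ y = Vtx.vA' j) ∨
     (∃ (i : ℕ) (h : i + 1 < n), x = Vtx.vA' ⟨i + 1, h⟩ ∧ y = Vtx.vA' ⟨i, by omega⟩)))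

section Aux
instance : LawfulBEq Letter2 where
  eq_of_beq {a b} h := by cases a <;> cases b <;> first | rfl | exact absurd h (by decide)
  rfl {a} := by cases a <;> rfl

@[simp] lemma Letter2.beq_aa : (Letter2.a == Letter2.a) = true := rfl
@[simp] lemma Letter2.beq_ab : (Letter2.a == Letter2.b) = false := rfl
@[simp] lemma Letter2.beq_ba : (Letter2.b == Letter2.a) = false := rfl
@[simp] lemma Letter2.beq_bb : (Letter2.b == Letter2.b) = true := rfl

variable {n : ℕ} (EAB EBC ECA : Fin n → Fin n → Prop)

lemma LWalk.append' {V σ : Type*} {E : V → σ → V → Prop} {x y z : V} {w1 w2 : List σ}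
    (h1 : LWalk E x w1 y) (h2 : LWalk E y w2 z) : LWalk E x (w1 ++ w2) z := by
  induction h1 with
  | nil => simpa
  | cons e _ ih => exact LWalk.cons e (ih h2)

/-- Invariant describing all walks ending at `a₁'`. -/
def Q : Vtx n → List Letter2 → Prop
  | Vtx.vA' m, w => w.count Letter2.a = 0 ∧ w.count Letter2.b = (m : ℕ)
  | Vtx.vC l, w => ∃ m : Fin n, ECA l m ∧ w.count Letter2.a = 0 ∧
      w.count Letter2.b = (m : ℕ) + 1
  | Vtx.vB j, w => ∃ l m : Fin n, EBC j l ∧ ECA l m ∧ w.count Letter2.a = 0 ∧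
      w.count Letter2.b = (m : ℕ) + 2
  | Vtx.vA i, w => ∃ k j l m : Fin n, (i : ℕ) ≤ (k : ℕ) ∧ EAB k j ∧ EBC j l ∧ ECA l m ∧
      w.count Letter2.a = (k : ℕ) - (i : ℕ) + 1 ∧ w.count Letter2.b = (m : ℕ) + 2
  | Vtx.vu, w => ∃ k j l m : Fin n, EAB k j ∧ EBC j l ∧ ECA l m ∧
      w.count Letter2.a = (k : ℕ) + 2 ∧ w.count Letter2.b = (m : ℕ) + 2

lemma key (hn : 0 < n) : ∀ {x : Vtx n} {w t}, LWalk (triEdge EAB EBC ECA) x w t →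
    t = Vtx.vA' ⟨0, hn⟩ → Q EAB EBC ECA x w := by
  intro x w t h
  induction h with
  | nil v =>
    rintro rfl
    simp [Q]
  | cons e _ ih =>
    intro ht
    have IH := ih ht
    rcases e with ⟨rfl, ⟨hpos, rfl, rfl⟩ | ⟨i, hlt, rfl, rfl⟩ | ⟨i, j, hE, rfl, rfl⟩⟩ |
      ⟨rfl, ⟨i, j, hE, rfl, rfl⟩ | ⟨i, j, hE, rfl, rfl⟩ | ⟨i, hlt, rfl, rfl⟩⟩
    · obtain ⟨k, j, l', m, _, h1, h2, h3, h4, h5⟩ := IH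
      simp [List.count_cons, Fin.val_mk] at h4 h5 ⊢
      exact ⟨k, j, l', m, h1, h2, h3, by simp [List.count_cons]; omega,
        by simp [List.count_cons]; omega⟩
    · obtain ⟨k, j, l', m, hik, h1, h2, h3, h4, h5⟩ := IH
      refine ⟨k, j, l', m, ?_, h1, h2, h3, ?_, ?_⟩
      · simp at hik ⊢; omega
      · simp [List.count_cons, Fin.val_mk] at h4 hik ⊢; omega
      · simp [List.count_cons, Fin.val_mk]; omega
    · obtain ⟨l', m, h1, h2, h3, h4⟩ := IH
      exact ⟨i, j, l', m, le_refl _, hE, h1, h2, by simp [List.count_cons, Fin.val_mk]; omega,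
        by simp [List.count_cons, Fin.val_mk]; omega⟩
    · obtain ⟨m, h1, h2, h3⟩ := IH
      exact ⟨j, m, hE, h1, by simp [List.count_cons, Fin.val_mk]; omega, by simp [List.count_cons, Fin.val_mk]; omega⟩
    · obtain ⟨h2, h3⟩ := IH
      exact ⟨j, hE, by simp [List.count_cons, Fin.val_mk]; omega, by simp [List.count_cons, Fin.val_mk]; omega⟩
    · obtain ⟨h2, h3⟩ := IH
      constructor
      · simp [List.count_cons, Fin.val_mk]; omega
      · simp [List.count_cons, Fin.val_mk] at h3 ⊢; omega

lemma upA (hn : 0 < n) : ∀ (m : ℕ) (h : m < n),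
    LWalk (triEdge EAB EBC ECA) Vtx.vu (List.replicate (m + 1) Letter2.a) (Vtx.vA ⟨m, h⟩) := by
  intro m
  induction m with
  | zero =>
    intro h
    exact LWalk.cons (Or.inl ⟨rfl, Or.inl ⟨hn, rfl, rfl⟩⟩) (LWalk.nil _)
  | succ m ih =>
    intro h
    have h' : m < n := by omega
    have step : LWalk (triEdge EAB EBC ECA) (Vtx.vA ⟨m, h'⟩) [Letter2.a] (Vtx.vA ⟨m + 1, h⟩) :=
      LWalk.cons (Or.inl ⟨rfl, Or.inr (Or.inl ⟨m, h, rfl, rfl⟩)⟩) (LWalk.nil _)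
    have := LWalk.append' (ih h') step
    simpa [List.replicate_succ' (n := m+1)] using this

lemma downA' (hn : 0 < n) : ∀ (m : ℕ) (h : m < n),
    LWalk (triEdge EAB EBC ECA) (Vtx.vA' ⟨m, h⟩) (List.replicate m Letter2.b)
      (Vtx.vA' ⟨0, hn⟩) := by
  intro m
  induction m with
  | zero => intro h; exact LWalk.nil _
  | succ m ih =>
    intro h
    have h' : m < n := by omega
    exact LWalk.cons (Or.inr ⟨rfl, Or.inr (Or.inr ⟨m, h, rfl, rfl⟩)⟩) (ih h')

end Aux

/-- There is a walk from `u` to `a₁'` in `H` whose label has equally many `a`s and `b`s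
iff `G` has a triangle. -/
theorem stmt6 {n : ℕ} (hn : 0 < n) (EAB EBC ECA : Fin n → Fin n → Prop) :
    (∃ w : List Letter2, w.count Letter2.a = w.count Letter2.b ∧
        LWalk (triEdge EAB EBC ECA) Vtx.vu w (Vtx.vA' ⟨0, hn⟩)) ↔
      ∃ i j l : Fin n, EAB i j ∧ EBC j l ∧ ECA l i := by
  constructor
  · rintro ⟨w, hcnt, hwalk⟩
    obtain ⟨k, j, l, m, h1, h2, h3, h4, h5⟩ := key EAB EBC ECA hn hwalk rfl
    have hkm : k = m := by
      apply Fin.ext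
      omega
    exact ⟨k, j, l, h1, h2, hkm ▸ h3⟩
  · rintro ⟨i, j, l, h1, h2, h3⟩
    refine ⟨List.replicate (i + 1) Letter2.a ++ [Letter2.a, Letter2.b, Letter2.b] ++
      List.replicate (i : ℕ) Letter2.b, ?_, ?_⟩
    · simp [List.count_append, List.count_replicate, List.count_cons]
    · refine LWalk.append' (LWalk.append' (upA EAB EBC ECA hn i i.isLt) ?_)
        (downA' EAB EBC ECA hn i i.isLt)
      refine LWalk.cons (Or.inl ⟨rfl, Or.inr (Or.inr ⟨i, j, h1, rfl, rfl⟩)⟩) ?_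
      refine LWalk.cons (Or.inr ⟨rfl, Or.inl ⟨j, l, h2, rfl, rfl⟩⟩) ?_
      exact LWalk.cons (Or.inr ⟨rfl, Or.inr (Or.inl ⟨l, i, h3, rfl, rfl⟩)⟩) (LWalk.nil _)
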